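/- Let f ∈ ℚ[x_1,…,x_n] be a degree-d form with h(f) = h, satisfying f = (x_1 + ℓ_1) v_1 + … + (x_M + ℓ_M) v_M + u_{M+1} v_{M+1} + … + u_h v_h, where each ℓ_i is a rational linear form in x_{M+1},…,x_n only and all u_{i'}, v_j are rational forms of positive degree. Then h(f(−ℓ_1,…,−ℓ_M, x_{M+1},…,x_n)) = h − M, where f(−ℓ_1,…,−ℓ_M, x_{M+1},…,x_n) ∈ ℚ[x_{M+1},…,x_n] is obtained by substituting x_i = −ℓ_i for 1 ≤ i ≤ M. -/

import Mathlib

open MvPolynomial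

/-- The h-invariant (rational Schmidt rank) of a polynomial `f`: the least `h` such that
`f = ∑_{i=1}^h U_i V_i` with all `U_i, V_i` rational forms of positive degree. -/
noncomputable def hInv {n : ℕ} (f : MvPolynomial (Fin n) ℚ) : ℕ :=
  sInf {h : ℕ | ∃ U V : Fin h → MvPolynomial (Fin n) ℚ,
    (∀ i, ∃ d, 0 < d ∧ (U i).IsHomogeneous d) ∧
    (∀ i, ∃ d, 0 < d ∧ (V i).IsHomogeneous d) ∧
    f = ∑ i, U i * V i}

namespace HInvAux

variable {n : ℕ}

lemma aeval_fixed (τ : Fin n → MvPolynomial (Fin n) ℚ) (p : MvPolynomial (Fin n) ℚ)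
    (h : ∀ j ∈ p.vars, τ j = X j) : aeval τ p = p := by
  have := hom_congr_vars (σ := Fin n) (R := ℚ)
    (f₁ := (aeval τ : MvPolynomial (Fin n) ℚ →ₐ[ℚ] MvPolynomial (Fin n) ℚ).toRingHom)
    (f₂ := RingHom.id _) (p₁ := p) (p₂ := p) ?_ ?_ rfl
  · simpa using this
  · ext r
    simp [algebraMap_eq]
  · intro i hi _
    simp [h i hi]

lemma coeff_aeval_kill (i : Fin n) (p : MvPolynomial (Fin n) ℚ) (m : Fin n →₀ ℕ) :
    coeff m (aeval (fun j => if j = i then 0 else X j) p)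
      = if m i = 0 then coeff m p else 0 := by
  classical
  induction p using MvPolynomial.induction_on' with
  | add p q hp hq =>
      rw [map_add, coeff_add, hp, hq, coeff_add]
      split_ifs <;> ring
  | monomial u c =>
      by_cases hui : u i = 0
      · have hval : aeval (fun j => if j = i then (0 : MvPolynomial (Fin n) ℚ) else X j)
            (monomial u c) = monomial u c := by
          rw [aeval_monomial]
          have : (Finsupp.prod u fun j k =>
              (if j = i then (0 : MvPolynomial (Fin n) ℚ) else X j) ^ k)
              = Finsupp.prod u fun j k => (X j : MvPolynomial (Fin n) ℚ) ^ k := by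
            refine Finsupp.prod_congr fun j hj => ?_
            rw [if_neg]
            rintro rfl
            exact (Finsupp.mem_support_iff.mp hj) hui
          rw [this, algebraMap_eq, ← monomial_eq]
        rw [hval]
        by_cases hmi : m i = 0
        · rw [if_pos hmi]
        · rw [if_neg hmi, coeff_monomial, if_neg]
          intro h
          exact hmi (h ▸ hui)
      · have hval : aeval (fun j => if j = i then (0 : MvPolynomial (Fin n) ℚ) else X j)
            (monomial u c) = 0 := by
          rw [aeval_monomial]
          have : (Finsupp.prod u fun j k =>
              (if j = i then (0 : MvPolynomial (Fin n) ℚ) else X j) ^ k) = 0 := by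
            refine Finset.prod_eq_zero (Finsupp.mem_support_iff.mpr hui) ?_
            dsimp only
            rw [if_pos rfl]
            exact zero_pow hui
          rw [this, mul_zero]
        rw [hval, coeff_zero]
        by_cases hmi : m i = 0
        · rw [if_pos hmi, coeff_monomial, if_neg]
          intro h
          exact hui (h.symm ▸ hmi)
        · rw [if_neg hmi]

lemma kill_decomp (i : Fin n) (p : MvPolynomial (Fin n) ℚ) :
    p = X i * (p.divMonomial (Finsupp.single i 1))
      + aeval (fun j => if j = i then 0 else X j) p := by
  classical
  ext m
  rw [coeff_add, coeff_aeval_kill, coeff_X_mul', coeff_divMonomial]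
  by_cases hmi : m i = 0
  · rw [if_neg (by simp [Finsupp.mem_support_iff, hmi]), if_pos hmi, zero_add]
  · have hm : Finsupp.single i 1 + (m - Finsupp.single i 1) = m := by
      ext j
      by_cases hj : j = i
      · subst hj
        simp only [Finsupp.add_apply, Finsupp.tsub_apply, Finsupp.single_eq_same]
        omega
      · simp [Finsupp.single_apply, Ne.symm hj, hj]
    rw [if_pos (Finsupp.mem_support_iff.mpr hmi), if_neg hmi, hm, add_zero]

lemma isHom_div {p : MvPolynomial (Fin n) ℚ} {d : ℕ} (hp : p.IsHomogeneous d) (i : Fin n) :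
    (p.divMonomial (Finsupp.single i 1)).IsHomogeneous (d - 1) := by
  intro m hm
  rw [coeff_divMonomial] at hm
  have h1 := hp hm
  rw [map_add] at h1
  have h2 : (Finsupp.weight (1 : Fin n → ℕ)) (Finsupp.single i 1) = 1 := by
    simp [Finsupp.weight_apply, Finsupp.sum_single_index]
  omega

lemma aeval_aeval (τ₁ τ₂ : Fin n → MvPolynomial (Fin n) ℚ) (p : MvPolynomial (Fin n) ℚ) :
    aeval τ₂ (aeval τ₁ p) = aeval (fun i => aeval τ₂ (τ₁ i)) p := by
  rw [comp_aeval_apply]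

lemma isHom_aeval {p : MvPolynomial (Fin n) ℚ} {d : ℕ} (hp : p.IsHomogeneous d)
    (τ : Fin n → MvPolynomial (Fin n) ℚ) (hτ : ∀ j, (τ j).IsHomogeneous 1) :
    (aeval τ p).IsHomogeneous d := by
  simpa using hp.aeval τ hτ

end HInvAux

lemma hInv_le {n k : ℕ} {f : MvPolynomial (Fin n) ℚ}
    (hk : ∃ U V : Fin k → MvPolynomial (Fin n) ℚ,
      (∀ i, ∃ d, 0 < d ∧ (U i).IsHomogeneous d) ∧
      (∀ i, ∃ d, 0 < d ∧ (V i).IsHomogeneous d) ∧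
      f = ∑ i, U i * V i) : hInv f ≤ k :=
  Nat.sInf_le hk


theorem stmt4 {n d h M : ℕ} (hM : 1 ≤ M) (hMh : M ≤ h) (hMn : M ≤ n)
    (f : MvPolynomial (Fin n) ℚ) (hf : f.IsHomogeneous d) (hfh : hInv f = h)
    (ℓ : Fin M → MvPolynomial (Fin n) ℚ)
    (hℓ : ∀ i, (ℓ i).IsHomogeneous 1 ∧ ∀ j ∈ (ℓ i).vars, M ≤ (j : ℕ))
    (u v : Fin h → MvPolynomial (Fin n) ℚ)
    (hu1 : ∀ (i : Fin h) (hi : (i : ℕ) < M),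
      u i = X ⟨(i : ℕ), lt_of_lt_of_le hi hMn⟩ + ℓ ⟨(i : ℕ), hi⟩)
    (hu : ∀ i : Fin h, M ≤ (i : ℕ) → ∃ e, 0 < e ∧ (u i).IsHomogeneous e)
    (hv : ∀ i, ∃ e, 0 < e ∧ (v i).IsHomogeneous e)
    (hsum : f = ∑ i, u i * v i) :
    hInv (aeval (fun j : Fin n =>
      if hj : (j : ℕ) < M then -ℓ ⟨(j : ℕ), hj⟩ else X j) f) = h - M := by
  classical
  set s : Fin n → MvPolynomial (Fin n) ℚ := fun j : Fin n =>
    if hj : (j : ℕ) < M then -ℓ ⟨(j : ℕ), hj⟩ else X j with hs_def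
  -- basic facts
  have hs1 : ∀ j, (s j).IsHomogeneous 1 := by
    intro j
    rw [hs_def]
    dsimp only
    split
    · exact ((hℓ _).1).neg
    · exact isHomogeneous_X _ _
  have hf0 : f ≠ 0 := by
    intro h0
    have hle : hInv f ≤ 0 := hInv_le ⟨Fin.elim0, Fin.elim0, fun i => i.elim0, fun i => i.elim0,
      by simp [h0]⟩
    omega
  have huh : ∀ i : Fin h, ∃ e, 0 < e ∧ (u i).IsHomogeneous e := by
    intro i
    by_cases hi : (i : ℕ) < M
    · exact ⟨1, one_pos, by rw [hu1 i hi]; exact (isHomogeneous_X _ _).add (hℓ _).1⟩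
    · exact hu i (le_of_not_gt hi)
  have hd2 : 2 ≤ d := by
    by_contra hd
    push_neg at hd
    apply hf0
    ext m
    rw [coeff_zero]
    by_cases hm : m.degree = d
    · rw [hsum, coeff_sum]
      refine Finset.sum_eq_zero fun i _ => ?_
      obtain ⟨a, ha, hua⟩ := huh i
      obtain ⟨b, hb, hvb⟩ := hv i
      exact (hua.mul hvb).coeff_eq_zero (by omega)
    · exact hf.coeff_eq_zero hm
  -- upper bound
  have hsg : aeval s f = ∑ i : Fin h, aeval s (u i) * aeval s (v i) := by
    rw [hsum, map_sum]
    simp only [map_mul]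
  have hu0 : ∀ (i : Fin h) (hi : (i : ℕ) < M), aeval s (u i) = 0 := by
    intro i hi
    rw [hu1 i hi, map_add, aeval_X]
    have hfix : aeval s (ℓ ⟨(i : ℕ), hi⟩) = ℓ ⟨(i : ℕ), hi⟩ := by
      refine HInvAux.aeval_fixed s _ fun j hj => ?_
      have := (hℓ ⟨(i : ℕ), hi⟩).2 j hj
      rw [hs_def]
      dsimp only
      rw [dif_neg (by omega)]
    rw [hfix, hs_def]
    dsimp only
    rw [dif_pos hi]
    exact neg_add_cancel _
  have memUp : (h - M) ∈ {k : ℕ | ∃ U V : Fin k → MvPolynomial (Fin n) ℚ,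
      (∀ i, ∃ e, 0 < e ∧ (U i).IsHomogeneous e) ∧
      (∀ i, ∃ e, 0 < e ∧ (V i).IsHomogeneous e) ∧
      aeval s f = ∑ i, U i * V i} := by
    set e : Fin (M + (h - M)) ≃ Fin h := finCongr (by omega) with he_def
    refine ⟨fun k => aeval s (u (e (Fin.natAdd M k))),
            fun k => aeval s (v (e (Fin.natAdd M k))), ?_, ?_, ?_⟩
    · intro k
      obtain ⟨a, ha, h'⟩ := hu (e (Fin.natAdd M k))
        (by simp only [he_def, finCongr_apply, Fin.coe_cast, Fin.coe_natAdd]; omega)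
      exact ⟨a, ha, HInvAux.isHom_aeval h' s hs1⟩
    · intro k
      obtain ⟨a, ha, h'⟩ := hv (e (Fin.natAdd M k))
      exact ⟨a, ha, HInvAux.isHom_aeval h' s hs1⟩
    · rw [hsg, ← Equiv.sum_comp e (fun i => aeval s (u i) * aeval s (v i)), Fin.sum_univ_add]
      rw [Finset.sum_eq_zero (fun i _ => by
        rw [hu0 (e (Fin.castAdd _ i))
          (by simp only [he_def, finCongr_apply, Fin.coe_cast, Fin.coe_castAdd]; exact i.isLt),
          zero_mul]), zero_add]
  have hup : hInv (aeval s f) ≤ h - M := Nat.sInf_le memUp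
  -- lower bound
  set φv : Fin n → MvPolynomial (Fin n) ℚ := fun j : Fin n =>
    if hj : (j : ℕ) < M then X j - ℓ ⟨(j : ℕ), hj⟩ else X j with hφ_def
  set ψv : Fin n → MvPolynomial (Fin n) ℚ := fun j : Fin n =>
    if hj : (j : ℕ) < M then X j + ℓ ⟨(j : ℕ), hj⟩ else X j with hψ_def
  have hψ1 : ∀ j, (ψv j).IsHomogeneous 1 := by
    intro j
    rw [hψ_def]
    dsimp only
    split
    · exact (isHomogeneous_X _ _).add (hℓ _).1
    · exact isHomogeneous_X _ _
  have hφ1 : ∀ j, (φv j).IsHomogeneous 1 := by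
    intro j
    rw [hφ_def]
    dsimp only
    split
    · exact (isHomogeneous_X _ _).sub (hℓ _).1
    · exact isHomogeneous_X _ _
  have hψfix : ∀ i : Fin M, aeval ψv (ℓ i) = ℓ i := by
    intro i
    refine HInvAux.aeval_fixed ψv _ fun j hj => ?_
    have := (hℓ i).2 j hj
    rw [hψ_def]
    dsimp only
    rw [dif_neg (by omega)]
  set F : MvPolynomial (Fin n) ℚ := aeval φv f with hF_def
  have hF : F.IsHomogeneous d := HInvAux.isHom_aeval hf φv hφ1
  have hψF : aeval ψv F = f := by
    rw [hF_def, comp_aeval_apply]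
    have : (fun j => aeval ψv (φv j)) = (X : Fin n → MvPolynomial (Fin n) ℚ) := by
      funext j
      by_cases hj : (j : ℕ) < M
      · simp only [hφ_def, hψ_def]
        rw [dif_pos hj, map_sub, aeval_X, dif_pos hj]
        have := hψfix ⟨(j : ℕ), hj⟩
        simp only [hψ_def] at this
        rw [this]
        ring
      · simp only [hφ_def, hψ_def]
        rw [dif_neg hj, aeval_X, dif_neg hj]
    rw [this, aeval_X_left_apply]
  set P : ℕ → MvPolynomial (Fin n) ℚ := fun k =>
    aeval (fun j : Fin n => if (j : ℕ) < k then 0 else X j) F with hP_def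
  have hP0 : P 0 = F := by
    rw [hP_def]
    dsimp only
    have : (fun j : Fin n => if (j : ℕ) < 0 then (0 : MvPolynomial (Fin n) ℚ) else X j)
        = X := by
      funext j
      simp
    rw [this, aeval_X_left_apply]
  have hPhom : ∀ k, (P k).IsHomogeneous d := by
    intro k
    refine HInvAux.isHom_aeval hF _ fun j => ?_
    split
    · exact isHomogeneous_zero _ _ _
    · exact isHomogeneous_X _ _
  have hPsucc : ∀ (k : ℕ) (hk : k < M), P (k + 1) =
      aeval (fun j : Fin n => if j = (⟨k, lt_of_lt_of_le hk hMn⟩ : Fin n) then 0 else X j)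
        (P k) := by
    intro k hk
    have hfun : (fun i : Fin n =>
        aeval (fun j : Fin n => if j = (⟨k, lt_of_lt_of_le hk hMn⟩ : Fin n)
            then (0 : MvPolynomial (Fin n) ℚ) else X j)
          (if (i : ℕ) < k then (0 : MvPolynomial (Fin n) ℚ) else X i))
        = (fun j : Fin n => if (j : ℕ) < k + 1 then (0 : MvPolynomial (Fin n) ℚ) else X j) := by
      funext j
      by_cases hjk : (j : ℕ) < k
      · rw [if_pos hjk, map_zero, if_pos (by omega)]
      · rw [if_neg hjk, aeval_X]
        by_cases hji : j = (⟨k, lt_of_lt_of_le hk hMn⟩ : Fin n)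
        · rw [if_pos hji, if_pos (by rw [hji]; exact Nat.lt_succ_self k)]
        · rw [if_neg hji, if_neg (by
            intro hcon
            have hjken : (j : ℕ) = k := by omega
            exact hji (Fin.ext hjken))]
    rw [hP_def]
    dsimp only
    conv_rhs => rw [HInvAux.aeval_aeval]
    rw [hfun]
  set XX : ℕ → MvPolynomial (Fin n) ℚ := fun i =>
    if hi : i < n then X (⟨i, hi⟩ : Fin n) else 0 with hXX_def
  set Q : ℕ → MvPolynomial (Fin n) ℚ := fun i =>
    if hi : i < n then (P i).divMonomial (Finsupp.single (⟨i, hi⟩ : Fin n) 1) else 0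
    with hQ_def
  have hQhom : ∀ i, (Q i).IsHomogeneous (d - 1) := by
    intro i
    rw [hQ_def]
    dsimp only
    split
    · exact HInvAux.isHom_div (hPhom i) _
    · exact isHomogeneous_zero _ _ _
  have tel : ∀ k, k ≤ M → F = (∑ i ∈ Finset.range k, XX i * Q i) + P k := by
    intro k
    induction k with
    | zero => intro _; simp [hP0]
    | succ k ih =>
      intro hk1
      have hk : k < M := by omega
      have hkn : k < n := lt_of_lt_of_le hk hMn
      have step : P k = XX k * Q k + P (k + 1) := by
        rw [hPsucc k hk, hXX_def, hQ_def]
        dsimp only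
        rw [dif_pos hkn, dif_pos hkn]
        exact HInvAux.kill_decomp _ _
      rw [ih (by omega), Finset.sum_range_succ, step]
      ring
  have hPM : P M = aeval s f := by
    have hfun : (fun i : Fin n =>
        aeval (fun j : Fin n => if (j : ℕ) < M then (0 : MvPolynomial (Fin n) ℚ) else X j)
          (φv i)) = s := by
      funext j
      by_cases hj : (j : ℕ) < M
      · simp only [hφ_def, hs_def]
        rw [dif_pos hj, dif_pos hj, map_sub, aeval_X, if_pos hj]
        have hfix : aeval (fun j : Fin n => if (j : ℕ) < M then (0 : MvPolynomial (Fin n) ℚ)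
            else X j) (ℓ ⟨(j : ℕ), hj⟩) = ℓ ⟨(j : ℕ), hj⟩ := by
          refine HInvAux.aeval_fixed _ _ fun j' hj' => ?_
          have := (hℓ ⟨(j : ℕ), hj⟩).2 j' hj'
          rw [if_neg (by omega)]
        rw [hfix]
        ring
      · simp only [hφ_def, hs_def]
        rw [dif_neg hj, dif_neg hj, aeval_X, if_neg hj]
    rw [hP_def]
    dsimp only
    conv_lhs => rw [hF_def, HInvAux.aeval_aeval]
    rw [hfun]
  have hψg : aeval ψv (aeval s f) = aeval s f := by
    have hfun : (fun i : Fin n => aeval ψv (s i)) = s := by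
      funext j
      by_cases hj : (j : ℕ) < M
      · simp only [hs_def]
        rw [dif_pos hj, map_neg]
        have hfix : aeval ψv (ℓ ⟨(j : ℕ), hj⟩) = ℓ ⟨(j : ℕ), hj⟩ := hψfix _
        rw [hfix]
      · simp only [hs_def]
        rw [dif_neg hj, aeval_X]
        simp only [hψ_def]
        rw [dif_neg hj]
    rw [HInvAux.aeval_aeval, hfun]
  -- the representation of f in terms of g's optimal representation
  have hne : ({k : ℕ | ∃ U V : Fin k → MvPolynomial (Fin n) ℚ,
      (∀ i, ∃ e, 0 < e ∧ (U i).IsHomogeneous e) ∧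
      (∀ i, ∃ e, 0 < e ∧ (V i).IsHomogeneous e) ∧
      aeval s f = ∑ i, U i * V i}).Nonempty := ⟨h - M, memUp⟩
  obtain ⟨A, B, hA, hB, hgAB⟩ : ∃ U V : Fin (hInv (aeval s f)) → MvPolynomial (Fin n) ℚ,
      (∀ i, ∃ e, 0 < e ∧ (U i).IsHomogeneous e) ∧
      (∀ i, ∃ e, 0 < e ∧ (V i).IsHomogeneous e) ∧
      aeval s f = ∑ i, U i * V i := Nat.sInf_mem hne
  have key : f = (∑ i : Fin M,
      (X (⟨(i : ℕ), lt_of_lt_of_le i.isLt hMn⟩ : Fin n) + ℓ i) * aeval ψv (Q (i : ℕ)))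
      + aeval s f := by
    conv_lhs => rw [← hψF, tel M le_rfl]
    rw [map_add, map_sum, hPM, hψg]
    congr 1
    rw [← Fin.sum_univ_eq_sum_range (fun i => aeval ψv (XX i * Q i)) M]
    refine Finset.sum_congr rfl fun i _ => ?_
    rw [map_mul]
    congr 1
    rw [hXX_def]
    dsimp only
    rw [dif_pos (lt_of_lt_of_le i.isLt hMn), aeval_X, hψ_def]
    dsimp only
    rw [dif_pos i.isLt]
  have hlow : hInv f ≤ M + hInv (aeval s f) := by
    apply hInv_le
    refine ⟨Fin.addCases
        (fun i : Fin M => X (⟨(i : ℕ), lt_of_lt_of_le i.isLt hMn⟩ : Fin n) + ℓ i) A,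
      Fin.addCases (fun i : Fin M => aeval ψv (Q (i : ℕ))) B, ?_, ?_, ?_⟩
    · intro i
      refine Fin.addCases ?_ ?_ i
      · intro i
        exact ⟨1, one_pos, by
          simp only [Fin.addCases_left]
          exact (isHomogeneous_X _ _).add (hℓ i).1⟩
      · intro k
        obtain ⟨a, ha, h'⟩ := hA k
        exact ⟨a, ha, by simp only [Fin.addCases_right]; exact h'⟩
    · intro i
      refine Fin.addCases ?_ ?_ i
      · intro i
        exact ⟨d - 1, by omega, by
          simp only [Fin.addCases_left]
          exact HInvAux.isHom_aeval (hQhom (i : ℕ)) ψv hψ1⟩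
      · intro k
        obtain ⟨a, ha, h'⟩ := hB k
        exact ⟨a, ha, by simp only [Fin.addCases_right]; exact h'⟩
    · rw [Fin.sum_univ_add]
      simp only [Fin.addCases_left, Fin.addCases_right]
      rw [← hgAB]
      exact key
  omega
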